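/- arXiv:2211.00357 — 3 statements merged into one kernel-verified Lean document; each statement's English description precedes it below -/
import Mathlib

section
/- Consider the quadratic ODE ẏ(t) = A y(t) + H(y(t) ⊗ y(t)) where A = J - R with J skew-symmetric and R symmetric positive semidefinite, and each H_i skew-symmetric. Then for any solution y with initial condition y(0) = y₀ and any t ≥ 0, one has ‖y(t)‖₂ ≤ ‖y₀‖₂. -/
open Matrix

lemma skew_dot {n : ℕ} {M : Matrix (Fin n) (Fin n) ℝ} (hM : Mᵀ = -M)
    (x : Fin n → ℝ) : x ⬝ᵥ M.mulVec x = 0 := by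
  have h1 : x ⬝ᵥ M.mulVec x = Mᵀ.mulVec x ⬝ᵥ x := by
    rw [Matrix.dotProduct_mulVec, ← Matrix.mulVec_transpose]
  rw [hM] at h1
  have h2 : (-M).mulVec x ⬝ᵥ x = -(x ⬝ᵥ M.mulVec x) := by
    rw [Matrix.neg_mulVec, neg_dotProduct, dotProduct_comm]
  linarith [h1, h2]

/-- For solutions of `ẏ = (J - R) y + ∑ i, yᵢ Hᵢ y` with `J`, `Hᵢ` skew-symmetric and
`R` symmetric positive semidefinite, the Euclidean norm is nonincreasing from the
initial condition: `‖y(t)‖₂ ≤ ‖y(0)‖₂` for all `t ≥ 0`. -/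
theorem stmt2 (n : ℕ) (J R : Matrix (Fin n) (Fin n) ℝ)
    (H : Fin n → Matrix (Fin n) (Fin n) ℝ)
    (hJ : Jᵀ = -J) (hR : Rᵀ = R) (hRpsd : ∀ x : Fin n → ℝ, 0 ≤ x ⬝ᵥ R.mulVec x)
    (hH : ∀ i, (H i)ᵀ = -(H i))
    (y : ℝ → Fin n → ℝ)
    (hy : ∀ t ∈ Set.Ici (0 : ℝ), HasDerivWithinAt y
      ((J - R).mulVec (y t) + ∑ i, y t i • (H i).mulVec (y t)) (Set.Ici 0) t) :
    ∀ t ≥ (0 : ℝ),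
      Real.sqrt (∑ i, (y t i) ^ 2) ≤ Real.sqrt (∑ i, (y 0 i) ^ 2) := by
  set v : ℝ → Fin n → ℝ :=
    fun t => (J - R).mulVec (y t) + ∑ i, y t i • (H i).mulVec (y t) with hv
  set g : ℝ → ℝ := fun t => ∑ i, (y t i) ^ 2 with hg
  -- derivative of g within Ici 0
  have hgderiv : ∀ t ∈ Set.Ici (0 : ℝ),
      HasDerivWithinAt g (2 * (y t ⬝ᵥ v t)) (Set.Ici 0) t := by
    intro t ht
    have hcomp : ∀ i, HasDerivWithinAt (fun u => y u i) (v t i) (Set.Ici 0) t :=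
      (hasDerivWithinAt_pi.1 (hy t ht))
    have h : HasDerivWithinAt g (∑ i, 2 * y t i * v t i) (Set.Ici 0) t := by
      apply HasDerivWithinAt.fun_sum
      intro i _
      have := (hcomp i).fun_pow 2
      simpa [mul_comm, mul_assoc, mul_left_comm] using this
    convert h using 1
    simp [dotProduct, Finset.mul_sum, mul_comm, mul_assoc, mul_left_comm]
  -- the derivative is nonpositive
  have hnonpos : ∀ t, y t ⬝ᵥ v t ≤ 0 := by
    intro t
    have hJskew : y t ⬝ᵥ J.mulVec (y t) = 0 := skew_dot hJ (y t)
    have hHskew : ∀ i, y t ⬝ᵥ (H i).mulVec (y t) = 0 := fun i => skew_dot (hH i) (y t)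
    have heq : y t ⬝ᵥ v t = -(y t ⬝ᵥ R.mulVec (y t)) := by
      rw [hv]
      simp only [Matrix.sub_mulVec, dotProduct_add, dotProduct_sub]
      rw [hJskew]
      have hsum : y t ⬝ᵥ (∑ i, y t i • (H i).mulVec (y t))
          = ∑ i, y t i * (y t ⬝ᵥ (H i).mulVec (y t)) := by
        simp only [dotProduct, Finset.sum_apply, Pi.smul_apply, smul_eq_mul,
          Finset.mul_sum]
        rw [Finset.sum_comm]
        exact Finset.sum_congr rfl fun i _ => Finset.sum_congr rfl fun j _ => by ring
      rw [hsum]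
      have : ∑ i, y t i * (y t ⬝ᵥ (H i).mulVec (y t)) = 0 :=
        Finset.sum_eq_zero fun i _ => by rw [hHskew i, mul_zero]
      rw [this]
      ring
    rw [heq]
    simpa using hRpsd (y t)
  -- g is antitone on Ici 0
  have hanti : AntitoneOn g (Set.Ici 0) := by
    apply antitoneOn_of_hasDerivWithinAt_nonpos (convex_Ici 0)
      (f' := fun t => 2 * (y t ⬝ᵥ v t))
    · intro t ht
      exact (hgderiv t ht).continuousWithinAt
    · rw [interior_Ici]
      intro t ht
      exact ((hgderiv t (Set.mem_Ici.mpr (le_of_lt ht))).hasDerivAt (Ici_mem_nhds ht)).hasDerivWithinAt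
    · rw [interior_Ici]
      intro t _
      nlinarith [hnonpos t]
  intro t ht
  exact Real.sqrt_le_sqrt (hanti Set.self_mem_Ici ht ht)
end

section
/- Consider the quadratic ODE ẏ(t) = (J - R) y(t) + H(y(t) ⊗ y(t)) with J skew-symmetric, R symmetric positive definite with smallest eigenvalue bounded below by λ > 0, and each H_i skew-symmetric. Then any solution satisfies the exponential decay estimate ‖y(t)‖₂² ≤ e^{-2λt} ‖y(0)‖₂² for all t ≥ 0. -/
open Matrix

lemma skew_dot_aux (n : ℕ) (A : Matrix (Fin n) (Fin n) ℝ) (hA : Aᵀ = -A) (x : Fin n → ℝ) :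
    x ⬝ᵥ A.mulVec x = 0 := by
  have h : x ⬝ᵥ A.mulVec x = - (x ⬝ᵥ A.mulVec x) := by
    conv_lhs => rw [dotProduct_mulVec, ← mulVec_transpose, hA, neg_mulVec,
      neg_dotProduct, dotProduct_comm]
  linarith

/-- Exponential decay: if `xᵀ R x ≥ λ ‖x‖₂²` with `λ > 0`, `R` symmetric, `J`, `Hᵢ`
skew-symmetric, then solutions of `ẏ = (J - R) y + ∑ i, yᵢ Hᵢ y` satisfy
`‖y(t)‖₂² ≤ e^{-2 λ t} ‖y(0)‖₂²` for `t ≥ 0`. -/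
theorem stmt5 (n : ℕ) (J R : Matrix (Fin n) (Fin n) ℝ)
    (H : Fin n → Matrix (Fin n) (Fin n) ℝ) (lam : ℝ) (hlam : 0 < lam)
    (hJ : Jᵀ = -J) (hR : Rᵀ = R)
    (hRlb : ∀ x : Fin n → ℝ, lam * (∑ i, (x i) ^ 2) ≤ x ⬝ᵥ R.mulVec x)
    (hH : ∀ i, (H i)ᵀ = -(H i))
    (y : ℝ → Fin n → ℝ)
    (hy : ∀ t ∈ Set.Ici (0 : ℝ), HasDerivWithinAt y
      ((J - R).mulVec (y t) + ∑ i, y t i • (H i).mulVec (y t)) (Set.Ici 0) t) :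
    ∀ t ≥ (0 : ℝ),
      (∑ i, (y t i) ^ 2) ≤ Real.exp (-2 * lam * t) * (∑ i, (y 0 i) ^ 2) := by
  set f : ℝ → Fin n → ℝ :=
    fun t => (J - R).mulVec (y t) + ∑ i, y t i • (H i).mulVec (y t) with hf
  set V : ℝ → ℝ := fun t => ∑ i, (y t i) ^ 2 with hV
  -- derivative of V
  have hVd : ∀ t ∈ Set.Ici (0 : ℝ),
      HasDerivWithinAt V (2 * (y t ⬝ᵥ f t)) (Set.Ici 0) t := by
    intro t ht
    have hcomp : ∀ i, HasDerivWithinAt (fun s => y s i) (f t i) (Set.Ici 0) t :=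
      fun i => (hasDerivWithinAt_pi.1 (hy t ht)) i
    have := HasDerivWithinAt.fun_sum (u := Finset.univ)
      (fun i _ => ((hcomp i).pow 2))
    refine this.congr_deriv ?_; symm
    simp only [dotProduct, Finset.mul_sum]
    congr 1; ext i; ring
  -- key bound: y ⬝ f ≤ -lam * V
  have hkey : ∀ t, 2 * (y t ⬝ᵥ f t) ≤ -(2 * lam) * V t := by
    intro t
    have hJ0 : y t ⬝ᵥ J.mulVec (y t) = 0 := skew_dot_aux n J hJ (y t)
    have hH0 : ∀ i, y t ⬝ᵥ (H i).mulVec (y t) = 0 :=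
      fun i => skew_dot_aux n (H i) (hH i) (y t)
    have hs : y t ⬝ᵥ (∑ i, y t i • (H i).mulVec (y t)) = 0 := by
      have : y t ⬝ᵥ (∑ i, y t i • (H i).mulVec (y t))
          = ∑ i, y t i * (y t ⬝ᵥ (H i).mulVec (y t)) := by
        simp only [dotProduct, Finset.sum_apply, Pi.smul_apply, smul_eq_mul, Finset.mul_sum]
        rw [Finset.sum_comm]
        exact Finset.sum_congr rfl fun i _ => Finset.sum_congr rfl fun j _ => by ring
      simp [this, hH0]
    have : y t ⬝ᵥ f t = -(y t ⬝ᵥ R.mulVec (y t)) := by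
      rw [hf]
      simp only [dotProduct_add, sub_mulVec, dotProduct_sub, hJ0, hs, add_zero]
      ring
    have hlb := hRlb (y t)
    rw [this]
    nlinarith [hlb]
  -- g := exp(2λt) V(t) is antitone on Ici 0
  set g : ℝ → ℝ := fun t => Real.exp (2 * lam * t) * V t with hg
  have hgd : ∀ t ∈ Set.Ici (0 : ℝ), HasDerivWithinAt g
      (Real.exp (2 * lam * t) * (2 * lam * V t + 2 * (y t ⬝ᵥ f t))) (Set.Ici 0) t := by
    intro t ht
    have he : HasDerivWithinAt (fun s => Real.exp (2 * lam * s))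
        (Real.exp (2 * lam * t) * (2 * lam)) (Set.Ici 0) t := by
      have : HasDerivAt (fun s => Real.exp (2 * lam * s))
          (Real.exp (2 * lam * t) * (2 * lam)) t := by
        have h1 : HasDerivAt (fun s : ℝ => 2 * lam * s) (2 * lam) t := by
          simpa using (hasDerivAt_id t).const_mul (2 * lam)
        exact (Real.hasDerivAt_exp (2 * lam * t)).comp t h1
      exact this.hasDerivWithinAt
    have := he.mul (hVd t ht)
    refine this.congr_deriv ?_; symm
    ring
  have hanti : AntitoneOn g (Set.Ici 0) := by
    apply antitoneOn_of_hasDerivWithinAt_nonpos (convex_Ici 0)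
      (f' := fun t => Real.exp (2 * lam * t) * (2 * lam * V t + 2 * (y t ⬝ᵥ f t)))
    · exact fun t ht => (hgd t ht).continuousWithinAt
    · intro t ht
      rw [interior_Ici] at ht ⊢
      exact (hgd t (Set.mem_Ici.2 (le_of_lt ht))).mono Set.Ioi_subset_Ici_self
    · intro t _
      have h1 := hkey t
      have h2 : 2 * lam * V t + 2 * (y t ⬝ᵥ f t) ≤ 0 := by linarith
      exact mul_nonpos_of_nonneg_of_nonpos (Real.exp_nonneg _) h2
  intro t ht
  have := hanti (Set.self_mem_Ici) ht ht
  rw [hg] at this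
  simp only [mul_zero, Real.exp_zero, one_mul] at this
  have hexp : Real.exp (-2 * lam * t) = (Real.exp (2 * lam * t))⁻¹ := by
    rw [← Real.exp_neg]; ring_nf
  rw [hexp, inv_mul_eq_div, le_div_iff₀ (Real.exp_pos _)]
  calc (∑ i, (y t i) ^ 2) * Real.exp (2 * lam * t)
      = Real.exp (2 * lam * t) * V t := by rw [mul_comm]
    _ ≤ V 0 := this
    _ = ∑ i, (y 0 i) ^ 2 := rfl
end

section
/- Consider the quadratic ODE ẏ(t) = (J - R) y(t) + H(y(t) ⊗ y(t)) with J skew-symmetric, R symmetric positive definite, and each H_i skew-symmetric. Then every solution converges to the origin: lim_{t→∞} y(t) = 0. -/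
open Matrix

lemma stmt6_skew_form {n : ℕ} (A : Matrix (Fin n) (Fin n) ℝ) (hA : Aᵀ = -A)
    (x : Fin n → ℝ) : x ⬝ᵥ A.mulVec x = 0 := by
  have h1 : x ⬝ᵥ A.mulVec x = Aᵀ.mulVec x ⬝ᵥ x := by
    rw [Matrix.dotProduct_mulVec, Matrix.mulVec_transpose]
  rw [hA] at h1
  simp [Matrix.neg_mulVec, dotProduct_comm] at h1
  linarith

lemma stmt6_coercive {n : ℕ} (R : Matrix (Fin n) (Fin n) ℝ)
    (hRpd : ∀ x : Fin n → ℝ, x ≠ 0 → 0 < x ⬝ᵥ R.mulVec x) :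
    ∃ c > 0, ∀ x : Fin n → ℝ, c * (x ⬝ᵥ x) ≤ x ⬝ᵥ R.mulVec x := by
  rcases Nat.eq_zero_or_pos n with hn | hn
  · subst hn
    exact ⟨1, one_pos, fun x => by simp [dotProduct]⟩
  set S : Set (Fin n → ℝ) := {x | x ⬝ᵥ x = 1} with hS
  have hcont : Continuous fun x : Fin n → ℝ => x ⬝ᵥ R.mulVec x := by
    continuity
  have hclosed : IsClosed S := by
    have : Continuous fun x : Fin n → ℝ => x ⬝ᵥ x := by continuity
    exact isClosed_eq this continuous_const
  have hbdd : Bornology.IsBounded S := by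
    apply (Metric.isBounded_iff_subset_closedBall 0).2
    refine ⟨1, fun x hx => ?_⟩
    simp only [Metric.mem_closedBall, dist_zero_right]
    rw [pi_norm_le_iff_of_nonneg zero_le_one]
    intro i
    have h1 : (x i)^2 ≤ x ⬝ᵥ x := by
      have : x ⬝ᵥ x = ∑ j, (x j)^2 := by simp [dotProduct, sq]
      rw [this]
      exact Finset.single_le_sum (fun j _ => sq_nonneg (x j)) (Finset.mem_univ i)
    have h2 : (x i)^2 ≤ 1 := hx ▸ h1
    exact abs_le_one_iff_mul_self_le_one.2 (by nlinarith)
  have hcompact : IsCompact S := Metric.isCompact_of_isClosed_isBounded hclosed hbdd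
  have hne : S.Nonempty := by
    refine ⟨Pi.single ⟨0, hn⟩ 1, ?_⟩
    simp [hS, dotProduct, Pi.single_apply]
  obtain ⟨x₀, hx₀S, hmin⟩ := hcompact.exists_isMinOn hne hcont.continuousOn
  have hx₀ne : x₀ ≠ 0 := by
    intro h; rw [hS] at hx₀S; simp [h] at hx₀S
  refine ⟨x₀ ⬝ᵥ R.mulVec x₀, hRpd x₀ hx₀ne, fun x => ?_⟩
  by_cases hx : x = 0
  · simp [hx]
  · have hxx : 0 < x ⬝ᵥ x := by
      rcases Function.ne_iff.1 hx with ⟨i, hi⟩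
      have hi' : x i ≠ 0 := by simpa using hi
      have : x ⬝ᵥ x = ∑ j, (x j)^2 := by simp [dotProduct, sq]
      rw [this]
      exact Finset.sum_pos' (fun j _ => sq_nonneg _) ⟨i, Finset.mem_univ i, by positivity⟩
    set r : ℝ := Real.sqrt (x ⬝ᵥ x) with hr
    have hrpos : 0 < r := Real.sqrt_pos.2 hxx
    have hrr : r * r = x ⬝ᵥ x := Real.mul_self_sqrt hxx.le
    have hu : (r⁻¹ • x) ∈ S := by
      simp only [hS, Set.mem_setOf_eq, smul_dotProduct, dotProduct_smul,
        smul_eq_mul]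
      field_simp
      linarith
    have hmin' : x₀ ⬝ᵥ R.mulVec x₀ ≤ (r⁻¹ • x) ⬝ᵥ R.mulVec (r⁻¹ • x) := hmin hu
    simp only [smul_dotProduct, dotProduct_smul, Matrix.mulVec_smul,
      smul_eq_mul] at hmin'
    have h3 : (x₀ ⬝ᵥ R.mulVec x₀) * (r * r) ≤ x ⬝ᵥ R.mulVec x := by
      have h4 : r⁻¹ * (r⁻¹ * (x ⬝ᵥ R.mulVec x)) * (r * r) = x ⬝ᵥ R.mulVec x := by
        field_simp
      nlinarith [hmin', hrpos, mul_pos hrpos hrpos]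
    linarith [h3, hrr ▸ h3]

lemma stmt6_dot_sum {n : ℕ} (v : Fin n → ℝ) (w : Fin n → Fin n → ℝ) :
    v ⬝ᵥ (∑ i, w i) = ∑ i, v ⬝ᵥ w i := by
  simp only [dotProduct, Finset.sum_apply, Finset.mul_sum]
  exact Finset.sum_comm

/-- Global asymptotic stability: with `J`, `Hᵢ` skew-symmetric and `R` symmetric
positive definite, every solution of `ẏ = (J - R) y + ∑ i, yᵢ Hᵢ y` converges to
the origin as `t → ∞`. -/
theorem stmt6 (n : ℕ) (J R : Matrix (Fin n) (Fin n) ℝ)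
    (H : Fin n → Matrix (Fin n) (Fin n) ℝ)
    (hJ : Jᵀ = -J) (hR : Rᵀ = R)
    (hRpd : ∀ x : Fin n → ℝ, x ≠ 0 → 0 < x ⬝ᵥ R.mulVec x)
    (hH : ∀ i, (H i)ᵀ = -(H i))
    (y : ℝ → Fin n → ℝ)
    (hy : ∀ t ∈ Set.Ici (0 : ℝ), HasDerivWithinAt y
      ((J - R).mulVec (y t) + ∑ i, y t i • (H i).mulVec (y t)) (Set.Ici 0) t) :
    Filter.Tendsto y Filter.atTop (nhds 0) := by
  obtain ⟨c, hc, hcle⟩ := stmt6_coercive R hRpd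
  set V : ℝ → ℝ := fun t => y t ⬝ᵥ y t with hVdef
  -- derivative of V
  have hV : ∀ t ∈ Set.Ici (0:ℝ), HasDerivWithinAt V
      (-2 * (y t ⬝ᵥ R.mulVec (y t))) (Set.Ici 0) t := by
    intro t ht
    set v : Fin n → ℝ := (J - R).mulVec (y t) + ∑ i, y t i • (H i).mulVec (y t) with hv
    have hyi : ∀ i, HasDerivWithinAt (fun s => y s i) (v i) (Set.Ici 0) t :=
      fun i => hasDerivWithinAt_pi.1 (hy t ht) i
    have hsum : HasDerivWithinAt (fun s => ∑ i, y s i * y s i)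
        (∑ i, (v i * y t i + y t i * v i)) (Set.Ici 0) t :=
      HasDerivWithinAt.fun_sum fun i _ => (hyi i).mul (hyi i)
    have key : (∑ i, (v i * y t i + y t i * v i)) = -2 * (y t ⬝ᵥ R.mulVec (y t)) := by
      have h1 : (∑ i, (v i * y t i + y t i * v i)) = 2 * (y t ⬝ᵥ v) := by
        simp only [dotProduct, Finset.mul_sum]
        exact Finset.sum_congr rfl fun i _ => by ring
      rw [h1, hv]
      have h2 : y t ⬝ᵥ ((J - R).mulVec (y t) + ∑ i, y t i • (H i).mulVec (y t))
          = y t ⬝ᵥ J.mulVec (y t) - y t ⬝ᵥ R.mulVec (y t)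
            + ∑ i, y t i * (y t ⬝ᵥ (H i).mulVec (y t)) := by
        rw [dotProduct_add, Matrix.sub_mulVec, dotProduct_sub,
          stmt6_dot_sum]
        simp [dotProduct_smul]
      rw [h2, stmt6_skew_form J hJ]
      have h3 : ∀ i : Fin n, y t i * (y t ⬝ᵥ (H i).mulVec (y t)) = 0 := fun i => by
        rw [stmt6_skew_form (H i) (hH i), mul_zero]
      rw [Finset.sum_congr rfl fun i _ => h3 i]
      simp
    have : V = fun s => ∑ i, y s i * y s i := by
      funext s; simp [hVdef, dotProduct]
    rw [this, ← key] at *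
    exact hsum
  -- the auxiliary function g
  set g : ℝ → ℝ := fun t => Real.exp (2*c*t) * V t with hgdef
  have hg : ∀ t ∈ Set.Ici (0:ℝ), HasDerivWithinAt g
      (Real.exp (2*c*t) * (2*c) * V t + Real.exp (2*c*t) * (-2 * (y t ⬝ᵥ R.mulVec (y t))))
      (Set.Ici 0) t := by
    intro t ht
    have hexp : HasDerivAt (fun s => Real.exp (2*c*s)) (Real.exp (2*c*t) * (2*c)) t := by
      have : HasDerivAt (fun s : ℝ => 2*c*s) (2*c) t := by
        simpa using (hasDerivAt_id t).const_mul (2*c)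
      exact this.exp
    exact hexp.hasDerivWithinAt.mul (hV t ht)
  -- g' ≤ 0 on the interior
  have hVnonneg : ∀ t, 0 ≤ V t := by
    intro t
    have : V t = ∑ i, (y t i)^2 := by simp [hVdef, dotProduct, sq]
    rw [this]
    exact Finset.sum_nonneg fun i _ => sq_nonneg _
  have hderiv_nonpos : ∀ t ∈ Set.Ici (0:ℝ),
      Real.exp (2*c*t) * (2*c) * V t + Real.exp (2*c*t) * (-2 * (y t ⬝ᵥ R.mulVec (y t))) ≤ 0 := by
    intro t _
    have h1 := hcle (y t)
    have h2 : (0:ℝ) < Real.exp (2*c*t) := Real.exp_pos _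
    nlinarith [h1, h2, hVnonneg t]
  -- g is antitone on Ici 0
  have hganti : AntitoneOn g (Set.Ici 0) := by
    apply antitoneOn_of_deriv_nonpos (convex_Ici (0:ℝ))
    · exact fun t ht => ((hg t ht).continuousWithinAt)
    · intro t ht
      rw [interior_Ici] at ht
      exact ((hg t (le_of_lt (Set.mem_Ioi.1 ht))).hasDerivAt (Ici_mem_nhds ht)).differentiableAt.differentiableWithinAt
    · intro t ht
      rw [interior_Ici] at ht
      rw [((hg t (le_of_lt (Set.mem_Ioi.1 ht))).hasDerivAt (Ici_mem_nhds ht)).deriv]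
      exact hderiv_nonpos t (le_of_lt (Set.mem_Ioi.1 ht))
  -- decay bound V t ≤ V 0 * exp (-(2*c*t))
  have hbound : ∀ t ∈ Set.Ici (0:ℝ), V t ≤ V 0 * Real.exp (-(2*c*t)) := by
    intro t ht
    have h1 : g t ≤ g 0 := hganti (Set.self_mem_Ici) ht ht
    simp only [hgdef, mul_zero, Real.exp_zero, one_mul] at h1
    have h2 : (0:ℝ) < Real.exp (2*c*t) := Real.exp_pos _
    rw [Real.exp_neg]
    have h3 : V t = (Real.exp (2*c*t))⁻¹ * (Real.exp (2*c*t) * V t) := by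
      field_simp
    rw [h3, mul_comm (V 0)]
    exact mul_le_mul_of_nonneg_left h1 (inv_nonneg.2 h2.le)
  -- V tends to 0
  have hVto0 : Filter.Tendsto V Filter.atTop (nhds 0) := by
    have hb : Filter.Tendsto (fun t => V 0 * Real.exp (-(2*c*t))) Filter.atTop (nhds 0) := by
      have h1 : Filter.Tendsto (fun t : ℝ => 2*c*t) Filter.atTop Filter.atTop :=
        Filter.Tendsto.const_mul_atTop (by linarith) Filter.tendsto_id
      have h2 : Filter.Tendsto (fun t : ℝ => Real.exp (-(2*c*t))) Filter.atTop (nhds 0) :=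
        Real.tendsto_exp_neg_atTop_nhds_zero.comp h1
      simpa using h2.const_mul (V 0)
    apply squeeze_zero' (Filter.Eventually.of_forall hVnonneg) _ hb
    filter_upwards [Filter.eventually_ge_atTop (0:ℝ)] with t ht
    exact hbound t ht
  -- conclude componentwise
  rw [tendsto_pi_nhds]
  intro i
  have hsq : Filter.Tendsto (fun t => (y t i)^2) Filter.atTop (nhds 0) := by
    apply squeeze_zero (fun t => sq_nonneg _) _ hVto0
    intro t
    have : V t = ∑ j, (y t j)^2 := by simp [hVdef, dotProduct, sq]
    rw [this]
    exact Finset.single_le_sum (fun j _ => sq_nonneg (y t j)) (Finset.mem_univ i)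
  have habs : Filter.Tendsto (fun t => |y t i|) Filter.atTop (nhds 0) := by
    have := (Real.continuous_sqrt.tendsto 0).comp hsq
    simpa [Function.comp_def, Real.sqrt_sq_eq_abs] using this
  simpa using tendsto_zero_iff_abs_tendsto_zero _ |>.2 habs
end
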